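/- Let K ∈ ℝ and let G : ℝ → ℝ be differentiable. Define m(v,r) = G((v/r)·(Kr + 1))·(K²r³ + 2Kr² + r) + r/2 for r > 0. Then m satisfies v·∂m/∂v + (Kr² + r)·∂m/∂r − m·(3Kr + 1) + Kr² = 0 for all v and all r > 0. -/

import Mathlib

/-- For `K ∈ ℝ` and differentiable `G`, the mass function
`m(v,r) = G((v/r)(Kr+1))·(K²r³ + 2Kr² + r) + r/2` satisfies
`v·m_,v + (Kr² + r)·m_,r − m·(3Kr + 1) + Kr² = 0` for `r > 0`. -/
theorem stmt_8 (K : ℝ) (G : ℝ → ℝ) (hG : Differentiable ℝ G) (v r : ℝ) (hr : 0 < r) :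
    v * deriv (fun w : ℝ =>
        G ((w / r) * (K * r + 1)) * (K ^ 2 * r ^ 3 + 2 * K * r ^ 2 + r) + r / 2) v
      + (K * r ^ 2 + r) * deriv (fun s : ℝ =>
        G ((v / s) * (K * s + 1)) * (K ^ 2 * s ^ 3 + 2 * K * s ^ 2 + s) + s / 2) r
      - (G ((v / r) * (K * r + 1)) * (K ^ 2 * r ^ 3 + 2 * K * r ^ 2 + r) + r / 2)
          * (3 * K * r + 1)
      + K * r ^ 2 = 0 := by
  have hrne : r ≠ 0 := ne_of_gt hr
  set u : ℝ := v / r * (K * r + 1) with hu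
  -- derivative in v
  have hinner_v : HasDerivAt (fun w : ℝ => w / r * (K * r + 1))
      (1 / r * (K * r + 1)) v := by
    simpa using ((hasDerivAt_id v).div_const r).mul_const (K * r + 1)
  have h1 : HasDerivAt (fun w : ℝ =>
      G ((w / r) * (K * r + 1)) * (K ^ 2 * r ^ 3 + 2 * K * r ^ 2 + r) + r / 2)
      (deriv G u * (1 / r * (K * r + 1)) * (K ^ 2 * r ^ 3 + 2 * K * r ^ 2 + r)) v := by
    exact (((hG u).hasDerivAt.comp v hinner_v).mul_const _).add_const _
  -- derivative in r
  have hinner_r : HasDerivAt (fun s : ℝ => v / s * (K * s + 1))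
      ((0 * r - v * 1) / r ^ 2 * (K * r + 1) + v / r * (K * 1)) r := by
    exact ((hasDerivAt_const r v).div (hasDerivAt_id r) hrne).mul
      (((hasDerivAt_id r).const_mul K).add_const 1)
  have hinner_r' : HasDerivAt (fun s : ℝ => v / s * (K * s + 1))
      (-(v / r ^ 2) * (K * r + 1) + v / r * K) r := by
    convert hinner_r using 1; ring
  have hP : HasDerivAt (fun s : ℝ => K ^ 2 * s ^ 3 + 2 * K * s ^ 2 + s)
      (K ^ 2 * (3 * r ^ 2) + 2 * K * (2 * r) + 1) r := by
    have h3 : HasDerivAt (fun s : ℝ => s ^ 3) (3 * r ^ 2) r := by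
      simpa using hasDerivAt_pow 3 r
    have h2 : HasDerivAt (fun s : ℝ => s ^ 2) (2 * r) r := by
      simpa using hasDerivAt_pow 2 r
    exact ((h3.const_mul (K ^ 2)).add (h2.const_mul (2 * K))).add (hasDerivAt_id r)
  have h2 : HasDerivAt (fun s : ℝ =>
      G ((v / s) * (K * s + 1)) * (K ^ 2 * s ^ 3 + 2 * K * s ^ 2 + s) + s / 2)
      (deriv G u * (-(v / r ^ 2) * (K * r + 1) + v / r * K)
          * (K ^ 2 * r ^ 3 + 2 * K * r ^ 2 + r)
        + G u * (K ^ 2 * (3 * r ^ 2) + 2 * K * (2 * r) + 1) + 1 / 2) r := by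
    have := (((hG u).hasDerivAt.comp r hinner_r').mul hP).add
      ((hasDerivAt_id r).div_const 2)
    exact this
  rw [h1.deriv, h2.deriv]
  have hv : v / r * r = v := div_mul_cancel₀ v hrne
  field_simp
  ring
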